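/- For a group G and g ∈ G, the map φ_g : M(G,2) → M(G,2) fixing G pointwise and sending g₁u ↦ (gg₁)u is an automorphism of the Moufang loop M(G,2), and g ↦ φ_g is an injective group homomorphism G → Aut(M(G,2)) provided G is nontrivial. -/
import Mathlib


/-- The Chein loop `M(G,2) = G ⊎ Gu`, realized on `G ⊕ G` where `Sum.inl g = g`
and `Sum.inr g = g·u`, with multiplication extending that of `G` and satisfying
(c1) `g₁(g₂u) = (g₂g₁)u`, (c2) `(g₁u)g₂ = (g₁g₂⁻¹)u`, (c3) `(g₁u)(g₂u) = g₂⁻¹g₁`. -/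
instance cheinMul (G : Type*) [Group G] : Mul (G ⊕ G) :=
  ⟨fun x y =>
    match x, y with
    | .inl a, .inl b => .inl (a * b)
    | .inl a, .inr b => .inr (b * a)
    | .inr a, .inl b => .inr (a * b⁻¹)
    | .inr a, .inr b => .inl (b⁻¹ * a)⟩


instance cheinOne (G : Type*) [Group G] : One (G ⊕ G) := ⟨Sum.inl 1⟩

/-- The map `φ_g : M(G,2) → M(G,2)` fixing `G` pointwise and sending `g₁u ↦ (gg₁)u`. -/
def cheinPhi {G : Type*} [Group G] (g : G) : G ⊕ G → G ⊕ G :=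
  fun x => match x with
  | .inl a => .inl a
  | .inr a => .inr (g * a)

/-- For each `g ∈ G`, the map `φ_g` is an automorphism of the Moufang loop `M(G,2)`,
and `g ↦ φ_g` is an injective group homomorphism `G → Aut(M(G,2))` provided `G` is
nontrivial. -/
theorem cheinPhi_injective_hom (G : Type*) [Group G] :
    (∀ g : G, Function.Bijective (cheinPhi g)) ∧
    (∀ (g : G) (x y : G ⊕ G), cheinPhi g (x * y) = cheinPhi g x * cheinPhi g y) ∧
    (∀ g h : G, cheinPhi (g * h) = cheinPhi g ∘ cheinPhi h) ∧
    (Nontrivial G → Function.Injective fun g : G => cheinPhi g) := by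
  refine ⟨fun g => ?_, fun g x y => ?_, fun g h => ?_, fun _ a b hab => ?_⟩
  · refine Function.bijective_iff_has_inverse.2 ⟨cheinPhi g⁻¹, fun x => ?_, fun x => ?_⟩ <;>
      rcases x with a | a <;> simp [cheinPhi]
  · rcases x with a | a <;> rcases y with b | b
    · rfl
    · show Sum.inr (g * (b * a)) = Sum.inr (g * b * a); rw [mul_assoc]
    · show Sum.inr (g * (a * b⁻¹)) = Sum.inr (g * a * b⁻¹); rw [mul_assoc]
    · show Sum.inl (b⁻¹ * a) = Sum.inl ((g * b)⁻¹ * (g * a)); rw [mul_inv_rev, mul_assoc,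
        inv_mul_cancel_left]
  · funext x
    rcases x with a | a <;> simp [cheinPhi, mul_assoc]
  · have := congrFun hab (Sum.inr (1 : G))
    simpa [cheinPhi] using this
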